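/- Let ρ be a d×d density matrix, U a d×d unitary matrix, α ∈ ℝ^d with α₁ ≥ α₂ ≥ … ≥ α_d ≥ 0, 1 ≤ k ≤ d, and let Π be the diagonal projection onto the first k standard basis vectors. Then ‖U diag(α₁,…,α_k,0,…,0) Uᴴ − ρ‖₁ ≤ √(2k) · (Σ_{i=k+1}^d α_i) + √(2k) · ‖diag(α) − Uᴴ ρ U‖₂ + 1 − tr(Π Uᴴ ρ U). -/

import Mathlib

open Matrix
open scoped ComplexOrder

/-- The singular values of a complex square matrix `M`: the square roots of the
eigenvalues of `Mᴴ * M` (in the order provided by the spectral theorem). -/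
noncomputable def singularValues {d : ℕ} (M : Matrix (Fin d) (Fin d) ℂ) : Fin d → ℝ :=
  fun i => Real.sqrt ((Matrix.isHermitian_conjTranspose_mul_self M).eigenvalues i)

/-- The Schatten `p`-norm of a complex square matrix, `(∑ i, sᵢ(M)^p)^(1/p)`. -/
noncomputable def schattenNorm {d : ℕ} (p : ℝ) (M : Matrix (Fin d) (Fin d) ℂ) : ℝ :=
  (∑ i, singularValues M i ^ p) ^ (1 / p)

section Aux
open Polynomial
variable {d : ℕ}

lemma charpoly_unitary_conj (W A : Matrix (Fin d) (Fin d) ℂ)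
    (hW : W ∈ Matrix.unitaryGroup (Fin d) ℂ) :
    (W * A * Wᴴ).charpoly = A.charpoly := by
  have h1 : W * Wᴴ = 1 := by
    simpa [Matrix.star_eq_conjTranspose] using (Matrix.mem_unitaryGroup_iff.mp hW)
  have hc : ∀ B : Matrix (Fin d) (Fin d) ℂ,
      (C : ℂ →+* ℂ[X]).mapMatrix B * Matrix.scalar (Fin d) (X : ℂ[X])
        = Matrix.scalar (Fin d) (X : ℂ[X]) * (C : ℂ →+* ℂ[X]).mapMatrix B := by
    intro B
    exact (Matrix.scalar_commute (X : ℂ[X]) (fun r => Commute.all _ r) _).symm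
  have hmap : ((C : ℂ →+* ℂ[X]).mapMatrix W) * ((C : ℂ →+* ℂ[X]).mapMatrix Wᴴ) = 1 := by
    rw [← RingHom.map_mul, h1, RingHom.map_one]
  have key : charmatrix (W * A * Wᴴ) =
      (C : ℂ →+* ℂ[X]).mapMatrix W * charmatrix A * (C : ℂ →+* ℂ[X]).mapMatrix Wᴴ := by
    simp only [charmatrix, mul_sub, sub_mul, RingHom.map_mul]
    congr 1
    rw [hc W]
    rw [mul_assoc, hmap, mul_one]
  rw [Matrix.charpoly, key, Matrix.det_mul, Matrix.det_mul, mul_comm, ← mul_assoc,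
    mul_comm ((C : ℂ →+* ℂ[X]).mapMatrix Wᴴ).det, ← Matrix.det_mul, hmap,
    Matrix.det_one, one_mul, Matrix.charpoly]

lemma charpoly_diagonal_real (μ : Fin d → ℝ) :
    (Matrix.diagonal (fun i => (μ i : ℂ))).charpoly
      = ∏ i, (X - C ((μ i : ℂ))) := by
  rw [Matrix.charpoly]
  have : charmatrix (Matrix.diagonal (fun i => (μ i : ℂ)))
      = Matrix.diagonal (fun i => (X - C ((μ i : ℂ)))) := by
    ext i j
    by_cases h : i = j
    · subst h; simp [charmatrix_apply_eq]
    · simp [charmatrix_apply_ne _ _ _ h, Matrix.diagonal_apply_ne _ h]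
  rw [this, Matrix.det_diagonal]

lemma charpoly_eq_prod (B : Matrix (Fin d) (Fin d) ℂ) (W : Matrix (Fin d) (Fin d) ℂ)
    (hW : W ∈ Matrix.unitaryGroup (Fin d) ℂ) (μ : Fin d → ℝ)
    (h : B = W * Matrix.diagonal (fun i => (μ i : ℂ)) * Wᴴ) :
    B.charpoly = ∏ i, (X - C ((μ i : ℂ))) := by
  rw [h, charpoly_unitary_conj W _ hW, charpoly_diagonal_real]

lemma eig_multiset (B : Matrix (Fin d) (Fin d) ℂ) (hB : B.IsHermitian)
    (W : Matrix (Fin d) (Fin d) ℂ)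
    (hW : W ∈ Matrix.unitaryGroup (Fin d) ℂ) (μ : Fin d → ℝ)
    (h : B = W * Matrix.diagonal (fun i => (μ i : ℂ)) * Wᴴ) :
    Finset.univ.val.map hB.eigenvalues = Finset.univ.val.map μ := by
  have h1 : B.charpoly = ∏ i, (X - C ((μ i : ℂ))) := charpoly_eq_prod B W hW μ h
  have h2 : B.charpoly = ∏ i, (X - C ((hB.eigenvalues i : ℂ))) := by
    refine charpoly_eq_prod B _ (hB.eigenvectorUnitary).2 hB.eigenvalues ?_
    exact hB.spectral_theorem
  have hroots : ∀ ν : Fin d → ℝ,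
      (∏ i, (X - C ((ν i : ℂ)))).roots = Finset.univ.val.map (fun i => ((ν i : ℂ))) := by
    intro ν
    rw [show (∏ i, (X - C ((ν i : ℂ)))) =
        ((Finset.univ.val.map fun i => ((ν i : ℂ))).map fun a => X - C a).prod by
      rw [Multiset.map_map]; rfl]
    exact roots_multiset_prod_X_sub_C _
  have := (hroots hB.eigenvalues).symm.trans (by rw [← h2, h1, hroots μ])
  have hinj : Function.Injective (fun x : ℝ => (x : ℂ)) := Complex.ofReal_injective
  apply Multiset.map_injective hinj
  simpa [Multiset.map_map, Function.comp_def] using this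

lemma sum_eig_eq (B : Matrix (Fin d) (Fin d) ℂ) (hB : B.IsHermitian)
    (W : Matrix (Fin d) (Fin d) ℂ)
    (hW : W ∈ Matrix.unitaryGroup (Fin d) ℂ) (μ : Fin d → ℝ)
    (h : B = W * Matrix.diagonal (fun i => (μ i : ℂ)) * Wᴴ) (f : ℝ → ℝ) :
    ∑ i, f (hB.eigenvalues i) = ∑ i, f (μ i) := by
  have := eig_multiset B hB W hW μ h
  calc ∑ i, f (hB.eigenvalues i)
      = ((Finset.univ.val.map hB.eigenvalues).map f).sum := by
        rw [Multiset.map_map]; rfl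
    _ = ((Finset.univ.val.map μ).map f).sum := by rw [this]
    _ = ∑ i, f (μ i) := by rw [Multiset.map_map]; rfl

lemma unitary_conjT_mul (U : Matrix (Fin d) (Fin d) ℂ)
    (hU : U ∈ Matrix.unitaryGroup (Fin d) ℂ) : Uᴴ * U = 1 := by
  simpa [Matrix.star_eq_conjTranspose] using (Matrix.mem_unitaryGroup_iff'.mp hU)

lemma unitary_mul_conjT (U : Matrix (Fin d) (Fin d) ℂ)
    (hU : U ∈ Matrix.unitaryGroup (Fin d) ℂ) : U * Uᴴ = 1 := by
  simpa [Matrix.star_eq_conjTranspose] using (Matrix.mem_unitaryGroup_iff.mp hU)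

lemma sum_sv_conj (A U : Matrix (Fin d) (Fin d) ℂ)
    (hU : U ∈ Matrix.unitaryGroup (Fin d) ℂ) (f : ℝ → ℝ) :
    ∑ i, f ((Matrix.isHermitian_conjTranspose_mul_self (U * A * Uᴴ)).eigenvalues i)
      = ∑ i, f ((Matrix.isHermitian_conjTranspose_mul_self A).eigenvalues i) := by
  have hH := Matrix.isHermitian_conjTranspose_mul_self A
  set V := hH.eigenvectorUnitary with hV
  have hspec : Aᴴ * A = (V : Matrix (Fin d) (Fin d) ℂ) *
      Matrix.diagonal (fun i => ((hH.eigenvalues i : ℝ) : ℂ)) * (V : Matrix (Fin d) (Fin d) ℂ)ᴴ :=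
    hH.spectral_theorem
  have hNN : (U * A * Uᴴ)ᴴ * (U * A * Uᴴ) = U * (Aᴴ * A) * Uᴴ := by
    simp only [Matrix.conjTranspose_mul, Matrix.conjTranspose_conjTranspose]
    calc U * (Aᴴ * Uᴴ) * (U * A * Uᴴ) = U * Aᴴ * (Uᴴ * U) * (A * Uᴴ) := by noncomm_ring
      _ = U * (Aᴴ * A) * Uᴴ := by rw [unitary_conjT_mul U hU]; noncomm_ring
  set w : Matrix (Fin d) (Fin d) ℂ := (V : Matrix (Fin d) (Fin d) ℂ) with hw
  set lam : Fin d → ℝ := hH.eigenvalues with hlam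
  have hwmem : w ∈ Matrix.unitaryGroup (Fin d) ℂ := V.2
  clear_value w lam
  have hB : (U * A * Uᴴ)ᴴ * (U * A * Uᴴ)
      = (U * w) * Matrix.diagonal (fun i => ((lam i : ℝ) : ℂ)) * (U * w)ᴴ := by
    rw [hNN, hspec]
    simp only [Matrix.conjTranspose_mul]
    noncomm_ring
  exact sum_eig_eq _ (Matrix.isHermitian_conjTranspose_mul_self _) _
    (mul_mem hU hwmem) _ hB f

lemma schattenNorm_conj (p : ℝ) (A U : Matrix (Fin d) (Fin d) ℂ)
    (hU : U ∈ Matrix.unitaryGroup (Fin d) ℂ) :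
    schattenNorm p (U * A * Uᴴ) = schattenNorm p A := by
  unfold schattenNorm singularValues
  rw [sum_sv_conj A U hU (fun x => Real.sqrt x ^ p)]

lemma herm_sv_sum (H : Matrix (Fin d) (Fin d) ℂ) (hH : H.IsHermitian) (f : ℝ → ℝ) :
    ∑ i, f ((Matrix.isHermitian_conjTranspose_mul_self H).eigenvalues i)
      = ∑ i, f (hH.eigenvalues i ^ 2) := by
  have hspec : H = (hH.eigenvectorUnitary : Matrix (Fin d) (Fin d) ℂ) *
      Matrix.diagonal (fun i => ((hH.eigenvalues i : ℝ) : ℂ)) *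
      (hH.eigenvectorUnitary : Matrix (Fin d) (Fin d) ℂ)ᴴ := hH.spectral_theorem
  set w : Matrix (Fin d) (Fin d) ℂ := (hH.eigenvectorUnitary : Matrix (Fin d) (Fin d) ℂ) with hw
  set lam : Fin d → ℝ := hH.eigenvalues with hlam
  have hwmem : w ∈ Matrix.unitaryGroup (Fin d) ℂ := hH.eigenvectorUnitary.2
  clear_value w lam
  have hB : Hᴴ * H = w * Matrix.diagonal (fun i => ((lam i ^ 2 : ℝ) : ℂ)) * wᴴ := by
    rw [hH.eq, hspec]
    calc (w * Matrix.diagonal (fun i => ((lam i : ℝ) : ℂ)) * wᴴ) *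
          (w * Matrix.diagonal (fun i => ((lam i : ℝ) : ℂ)) * wᴴ)
        = w * (Matrix.diagonal (fun i => ((lam i : ℝ) : ℂ)) * (wᴴ * w) *
            Matrix.diagonal (fun i => ((lam i : ℝ) : ℂ))) * wᴴ := by noncomm_ring
      _ = w * Matrix.diagonal (fun i => ((lam i ^ 2 : ℝ) : ℂ)) * wᴴ := by
          rw [unitary_conjT_mul w hwmem, mul_one, Matrix.diagonal_mul_diagonal]
          congr 1
          ext i
          push_cast
          ring
  exact sum_eig_eq _ (Matrix.isHermitian_conjTranspose_mul_self _) _ hwmem _ hB f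

lemma schatten1_herm (H : Matrix (Fin d) (Fin d) ℂ) (hH : H.IsHermitian) :
    schattenNorm 1 H = ∑ i, |hH.eigenvalues i| := by
  unfold schattenNorm singularValues
  rw [herm_sv_sum H hH (fun x => Real.sqrt x ^ (1 : ℝ))]
  simp [Real.rpow_one, Real.sqrt_sq_eq_abs]

lemma schatten2_herm (H : Matrix (Fin d) (Fin d) ℂ) (hH : H.IsHermitian) :
    schattenNorm 2 H = Real.sqrt (∑ i, (hH.eigenvalues i) ^ 2) := by
  unfold schattenNorm singularValues
  rw [herm_sv_sum H hH (fun x => Real.sqrt x ^ (2 : ℝ))]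
  have h1 : ∀ i : Fin d, Real.sqrt (hH.eigenvalues i ^ 2) ^ (2 : ℝ)
      = hH.eigenvalues i ^ 2 := by
    intro i
    rw [Real.rpow_two, Real.sq_sqrt (sq_nonneg _)]
  simp only [h1]
  rw [Real.sqrt_eq_rpow]

lemma conjT_mem (U : Matrix (Fin d) (Fin d) ℂ)
    (hU : U ∈ Matrix.unitaryGroup (Fin d) ℂ) : Uᴴ ∈ Matrix.unitaryGroup (Fin d) ℂ := by
  rw [← Matrix.star_eq_conjTranspose]
  exact Unitary.star_mem hU

lemma diag_pm_unitary (s : Fin d → ℂ) (hs : ∀ i, s i = 1 ∨ s i = -1) :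
    Matrix.diagonal s ∈ Matrix.unitaryGroup (Fin d) ℂ := by
  rw [Matrix.mem_unitaryGroup_iff, Matrix.star_eq_conjTranspose, Matrix.diagonal_conjTranspose,
    Matrix.diagonal_mul_diagonal]
  ext i j
  rcases eq_or_ne i j with rfl | h
  · rcases hs i with h1 | h1 <;> simp [h1, Matrix.diagonal_apply_eq]
  · simp [Matrix.diagonal_apply_ne _ h, Matrix.one_apply_ne h]

lemma unitary_diag_re_le (G : Matrix (Fin d) (Fin d) ℂ)
    (hG : G ∈ Matrix.unitaryGroup (Fin d) ℂ) (i : Fin d) : |(G i i).re| ≤ 1 := by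
  have h1 : (G * Gᴴ) i i = 1 := by rw [unitary_mul_conjT G hG]; simp
  have h2 : ∑ j, Complex.normSq (G i j) = 1 := by
    have := congrArg Complex.re h1
    rw [Matrix.mul_apply] at this
    simpa [Matrix.conjTranspose_apply, Complex.mul_conj] using this
  have h3 : Complex.normSq (G i i) ≤ 1 := by
    rw [← h2]
    exact Finset.single_le_sum (f := fun j => Complex.normSq (G i j))
      (fun j _ => Complex.normSq_nonneg _) (Finset.mem_univ i)
  calc |(G i i).re| ≤ ‖G i i‖ := Complex.abs_re_le_norm _
    _ ≤ 1 := by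
        have : ‖G i i‖ = Real.sqrt (Complex.normSq (G i i)) := rfl
        rw [this, ← Real.sqrt_one]
        exact Real.sqrt_le_sqrt h3

lemma trace_dual (A C : Matrix (Fin d) (Fin d) ℂ) (hA : A.IsHermitian)
    (hC : C ∈ Matrix.unitaryGroup (Fin d) ℂ) :
    ((A * C).trace).re ≤ ∑ i, |hA.eigenvalues i| := by
  have hspec : A = (hA.eigenvectorUnitary : Matrix (Fin d) (Fin d) ℂ) *
      Matrix.diagonal (fun i => ((hA.eigenvalues i : ℝ) : ℂ)) *
      (hA.eigenvectorUnitary : Matrix (Fin d) (Fin d) ℂ)ᴴ := hA.spectral_theorem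
  set w : Matrix (Fin d) (Fin d) ℂ := (hA.eigenvectorUnitary : Matrix (Fin d) (Fin d) ℂ) with hw
  set lam : Fin d → ℝ := hA.eigenvalues with hlam
  have hwmem : w ∈ Matrix.unitaryGroup (Fin d) ℂ := hA.eigenvectorUnitary.2
  clear_value w lam
  set G : Matrix (Fin d) (Fin d) ℂ := wᴴ * C * w with hG
  have hGmem : G ∈ Matrix.unitaryGroup (Fin d) ℂ :=
    mul_mem (mul_mem (conjT_mem w hwmem) hC) hwmem
  have htr : (A * C).trace = (G * Matrix.diagonal (fun i => ((lam i : ℝ) : ℂ))).trace := by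
    have h0 : A * C = w * (Matrix.diagonal (fun i => ((lam i : ℝ) : ℂ))) * (wᴴ * C) := by
      rw [hspec]; noncomm_ring
    rw [h0, Matrix.trace_mul_cycle, Matrix.mul_assoc]
  rw [htr]
  have hdiag : (G * Matrix.diagonal (fun i => ((lam i : ℝ) : ℂ))).trace
      = ∑ i, G i i * ((lam i : ℝ) : ℂ) := by
    rw [Matrix.trace]
    congr 1
    ext i
    rw [Matrix.diag_apply, Matrix.mul_diagonal]
  rw [hdiag]
  rw [Complex.re_sum]
  have : ∀ i : Fin d, (G i i * ((lam i : ℝ) : ℂ)).re ≤ |lam i| := by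
    intro i
    have : (G i i * ((lam i : ℝ) : ℂ)).re = (G i i).re * lam i := by
      simp [Complex.mul_re]
    rw [this]
    calc (G i i).re * lam i ≤ |(G i i).re * lam i| := le_abs_self _
      _ = |(G i i).re| * |lam i| := abs_mul _ _
      _ ≤ 1 * |lam i| := by
          exact mul_le_mul_of_nonneg_right (unitary_diag_re_le G hGmem i) (abs_nonneg _)
      _ = |lam i| := one_mul _
  exact Finset.sum_le_sum fun i _ => this i

lemma herm_exists_dual (H : Matrix (Fin d) (Fin d) ℂ) (hH : H.IsHermitian) :
    ∃ S ∈ Matrix.unitaryGroup (Fin d) ℂ,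
      ((H * S).trace).re = ∑ i, |hH.eigenvalues i| := by
  have hspec : H = (hH.eigenvectorUnitary : Matrix (Fin d) (Fin d) ℂ) *
      Matrix.diagonal (fun i => ((hH.eigenvalues i : ℝ) : ℂ)) *
      (hH.eigenvectorUnitary : Matrix (Fin d) (Fin d) ℂ)ᴴ := hH.spectral_theorem
  set w : Matrix (Fin d) (Fin d) ℂ := (hH.eigenvectorUnitary : Matrix (Fin d) (Fin d) ℂ) with hw
  set lam : Fin d → ℝ := hH.eigenvalues with hlam
  have hwmem : w ∈ Matrix.unitaryGroup (Fin d) ℂ := hH.eigenvectorUnitary.2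
  clear_value w lam
  set s : Fin d → ℂ := fun i => if lam i < 0 then (-1 : ℂ) else 1 with hs
  have hsmem : Matrix.diagonal s ∈ Matrix.unitaryGroup (Fin d) ℂ :=
    diag_pm_unitary s (fun i => by by_cases h : lam i < 0 <;> simp [hs, h])
  refine ⟨w * Matrix.diagonal s * wᴴ, mul_mem (mul_mem hwmem hsmem) (conjT_mem w hwmem), ?_⟩
  have key : H * (w * Matrix.diagonal s * wᴴ)
      = w * (Matrix.diagonal (fun i => ((lam i : ℝ) : ℂ) * s i)) * wᴴ := by
    rw [hspec, ← Matrix.diagonal_mul_diagonal]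
    calc w * Matrix.diagonal (fun i => ((lam i : ℝ) : ℂ)) * wᴴ * (w * Matrix.diagonal s * wᴴ)
        = w * (Matrix.diagonal (fun i => ((lam i : ℝ) : ℂ)) * (wᴴ * w) * Matrix.diagonal s) * wᴴ
          := by noncomm_ring
      _ = w * (Matrix.diagonal (fun i => ((lam i : ℝ) : ℂ)) * Matrix.diagonal s) * wᴴ := by
          rw [unitary_conjT_mul w hwmem, mul_one]
  rw [key, Matrix.trace_mul_cycle, unitary_conjT_mul w hwmem, Matrix.one_mul,
    Matrix.trace_diagonal]
  rw [Complex.re_sum]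
  congr 1
  ext i
  by_cases h : lam i < 0
  · simp [hs, h, abs_of_neg h]
  · simp [hs, h, abs_of_nonneg (not_lt.mp h)]

lemma schatten1_add_le (A B : Matrix (Fin d) (Fin d) ℂ)
    (hA : A.IsHermitian) (hB : B.IsHermitian) :
    schattenNorm 1 (A + B) ≤ schattenNorm 1 A + schattenNorm 1 B := by
  obtain ⟨S, hS, hSt⟩ := herm_exists_dual (A + B) (hA.add hB)
  rw [schatten1_herm _ (hA.add hB), ← hSt, add_mul, Matrix.trace_add, Complex.add_re]
  exact add_le_add
    ((trace_dual A S hA hS).trans_eq (schatten1_herm A hA).symm)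
    ((trace_dual B S hB hS).trans_eq (schatten1_herm B hB).symm)

lemma trace_eq_sum_eig (B : Matrix (Fin d) (Fin d) ℂ) (hB : B.IsHermitian) :
    B.trace = ∑ i, ((hB.eigenvalues i : ℝ) : ℂ) := by
  have hspec : B = (hB.eigenvectorUnitary : Matrix (Fin d) (Fin d) ℂ) *
      Matrix.diagonal (fun i => ((hB.eigenvalues i : ℝ) : ℂ)) *
      (hB.eigenvectorUnitary : Matrix (Fin d) (Fin d) ℂ)ᴴ := hB.spectral_theorem
  set w : Matrix (Fin d) (Fin d) ℂ := (hB.eigenvectorUnitary : Matrix (Fin d) (Fin d) ℂ) with hw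
  set lam : Fin d → ℝ := hB.eigenvalues with hlam
  have hwmem : w ∈ Matrix.unitaryGroup (Fin d) ℂ := hB.eigenvectorUnitary.2
  clear_value w lam
  rw [hspec, Matrix.trace_mul_cycle, unitary_conjT_mul w hwmem, Matrix.one_mul,
    Matrix.trace_diagonal]

lemma schatten1_psd (A : Matrix (Fin d) (Fin d) ℂ) (hA : A.PosSemidef) :
    schattenNorm 1 A = A.trace.re := by
  rw [schatten1_herm A hA.1, trace_eq_sum_eig A hA.1, Complex.re_sum]
  congr 1
  ext i
  rw [abs_of_nonneg (hA.eigenvalues_nonneg i)]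
  simp

lemma schatten1_le_sqrt_rank (H : Matrix (Fin d) (Fin d) ℂ) (hH : H.IsHermitian)
    (r : ℕ) (hr : H.rank ≤ r) :
    schattenNorm 1 H ≤ Real.sqrt r * schattenNorm 2 H := by
  classical
  rw [schatten1_herm H hH, schatten2_herm H hH]
  set lam : Fin d → ℝ := hH.eigenvalues with hlam
  set s : Finset (Fin d) := Finset.univ.filter (fun i => lam i ≠ 0) with hsdef
  have hcard : s.card ≤ r := by
    have h0 := hH.rank_eq_card_non_zero_eigs
    rw [Fintype.card_subtype] at h0
    rw [← hlam] at h0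
    rw [hsdef, ← h0]
    exact hr
  have h1 : ∑ i, |lam i| = ∑ i ∈ s, |lam i| := by
    refine (Finset.sum_subset (Finset.subset_univ s) ?_).symm
    intro x _ hx
    rw [hsdef] at hx
    simp only [Finset.mem_filter, Finset.mem_univ, true_and, not_not] at hx
    simp [hx]
  have h2 : (∑ i ∈ s, |lam i|) ^ 2 ≤ (∑ i ∈ s, (1:ℝ) * |lam i|) ^ 2 := by
    simp
  have hcs : (∑ i ∈ s, (1:ℝ) * |lam i|) ^ 2
      ≤ (∑ i ∈ s, (1:ℝ)^2) * (∑ i ∈ s, |lam i|^2) :=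
    Finset.sum_mul_sq_le_sq_mul_sq s _ _
  have h3 : (∑ i ∈ s, (1:ℝ)^2) * (∑ i ∈ s, |lam i|^2) ≤ (r:ℝ) * ∑ i, lam i ^ 2 := by
    apply mul_le_mul
    · simpa using (Nat.cast_le.mpr hcard : (s.card : ℝ) ≤ r)
    · refine (Finset.sum_le_sum_of_subset_of_nonneg (Finset.subset_univ s)
        (fun i _ _ => sq_nonneg _)).trans_eq ?_
      congr 1; ext i; rw [sq_abs]
    · exact Finset.sum_nonneg fun i _ => sq_nonneg _
    · positivity
  have hnn : (0:ℝ) ≤ ∑ i, |lam i| := Finset.sum_nonneg fun i _ => abs_nonneg _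
  have : (∑ i, |lam i|) ^ 2 ≤ (r:ℝ) * ∑ i, lam i ^ 2 := by
    rw [h1]
    calc (∑ i ∈ s, |lam i|) ^ 2 ≤ (∑ i ∈ s, (1:ℝ)^2) * (∑ i ∈ s, |lam i|^2) := by
          simpa using hcs
      _ ≤ (r:ℝ) * ∑ i, lam i ^ 2 := h3
  calc ∑ i, |lam i| = Real.sqrt ((∑ i, |lam i|) ^ 2) := (Real.sqrt_sq hnn).symm
    _ ≤ Real.sqrt ((r:ℝ) * ∑ i, lam i ^ 2) := Real.sqrt_le_sqrt this
    _ = Real.sqrt r * Real.sqrt (∑ i, lam i ^ 2) := Real.sqrt_mul (Nat.cast_nonneg r) _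

lemma matrix_rank_add_le (A B : Matrix (Fin d) (Fin d) ℂ) :
    (A + B).rank ≤ A.rank + B.rank := by
  unfold Matrix.rank
  rw [Matrix.mulVecLin_add]
  have hle : LinearMap.range (A.mulVecLin + B.mulVecLin)
      ≤ LinearMap.range A.mulVecLin ⊔ LinearMap.range B.mulVecLin := by
    rintro x ⟨y, rfl⟩
    exact Submodule.mem_sup.2 ⟨A.mulVecLin y, ⟨y, rfl⟩, B.mulVecLin y, ⟨y, rfl⟩, rfl⟩
  calc Module.finrank ℂ (LinearMap.range (A.mulVecLin + B.mulVecLin))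
      ≤ Module.finrank ℂ ↥(LinearMap.range A.mulVecLin ⊔ LinearMap.range B.mulVecLin) :=
        Submodule.finrank_mono hle
    _ ≤ _ := Submodule.finrank_add_le_finrank_add_finrank _ _

lemma eig_congr {A B : Matrix (Fin d) (Fin d) ℂ} (h : A = B)
    (hA : A.IsHermitian) (hB : B.IsHermitian) : hA.eigenvalues = hB.eigenvalues := by
  subst h; rfl

lemma schattenNorm_congr (p : ℝ) (A B : Matrix (Fin d) (Fin d) ℂ)
    (h : Aᴴ * A = Bᴴ * B) : schattenNorm p A = schattenNorm p B := by
  unfold schattenNorm singularValues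
  rw [eig_congr h (Matrix.isHermitian_conjTranspose_mul_self A)
    (Matrix.isHermitian_conjTranspose_mul_self B)]

lemma schatten2_eq_frobenius (M : Matrix (Fin d) (Fin d) ℂ) :
    schattenNorm 2 M = Real.sqrt (∑ j, ∑ i, Complex.normSq (M i j)) := by
  unfold schattenNorm singularValues
  have h1 : ∀ i : Fin d, Real.sqrt ((Matrix.isHermitian_conjTranspose_mul_self M).eigenvalues i)
      ^ (2:ℝ) = (Matrix.isHermitian_conjTranspose_mul_self M).eigenvalues i := by
    intro i
    rw [Real.rpow_two, Real.sq_sqrt (Matrix.eigenvalues_conjTranspose_mul_self_nonneg M i)]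
  simp only [h1]
  rw [Real.sqrt_eq_rpow]
  congr 1
  have h2 : (∑ i, (Matrix.isHermitian_conjTranspose_mul_self M).eigenvalues i)
      = (Mᴴ * M).trace.re := by
    rw [trace_eq_sum_eig _ (Matrix.isHermitian_conjTranspose_mul_self M), Complex.re_sum]
    simp
  rw [h2, Matrix.trace]
  rw [Complex.re_sum]
  congr 1
  ext j
  rw [Matrix.diag_apply, Matrix.mul_apply, Complex.re_sum]
  congr 1
  ext i
  rw [Matrix.conjTranspose_apply]
  simp [Complex.mul_conj, Complex.normSq_apply]

lemma schatten2_mono_entries (M X : Matrix (Fin d) (Fin d) ℂ)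
    (h : ∀ i j, Complex.normSq (M i j) ≤ Complex.normSq (X i j)) :
    schattenNorm 2 M ≤ schattenNorm 2 X := by
  rw [schatten2_eq_frobenius, schatten2_eq_frobenius]
  apply Real.sqrt_le_sqrt
  exact Finset.sum_le_sum fun j _ => Finset.sum_le_sum fun i _ => h i j

lemma card_filter_lt (k : ℕ) (hkd : k ≤ d) :
    (Finset.univ.filter fun i : Fin d => (i : ℕ) < k).card = k := by
  refine Finset.card_eq_of_bijective (fun i h => ⟨i, h.trans_le hkd⟩) ?_ ?_ ?_
  · intro a ha
    simp only [Finset.mem_filter, Finset.mem_univ, true_and] at ha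
    exact ⟨a, ha, rfl⟩
  · intro i h
    simpa using h
  · intro i j hi hj hij
    simpa using congrArg Fin.val hij

end Aux

/-- For a density matrix `ρ`, a unitary `U`, non-increasing non-negative `α`, and `Π` the
diagonal projection onto the first `k` standard basis vectors,
`‖U diag(α₀,…,α_{k-1},0,…,0) Uᴴ - ρ‖₁
  ≤ √(2k) (∑_{i ≥ k} αᵢ) + √(2k) ‖diag(α) - Uᴴ ρ U‖₂ + 1 - tr(Π Uᴴ ρ U)`. -/
theorem truncation_trace_norm_bound' (d k : ℕ) (hk1 : 1 ≤ k) (hkd : k ≤ d)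
    (ρ : Matrix (Fin d) (Fin d) ℂ) (hρ : ρ.PosSemidef) (hρtr : ρ.trace = 1)
    (U : Matrix (Fin d) (Fin d) ℂ) (hU : U ∈ Matrix.unitaryGroup (Fin d) ℂ)
    (α : Fin d → ℝ) (hα : Antitone α) (hαnn : ∀ i, 0 ≤ α i)
    (Pk : Matrix (Fin d) (Fin d) ℂ)
    (hPk : Pk = Matrix.diagonal (fun i : Fin d => if (i : ℕ) < k then (1 : ℂ) else 0)) :
    schattenNorm 1
        (U * Matrix.diagonal (fun i : Fin d => if (i : ℕ) < k then (α i : ℂ) else 0) * Uᴴ - ρ)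
      ≤ Real.sqrt (2 * k) * (∑ i ∈ Finset.univ.filter (fun i : Fin d => k ≤ (i : ℕ)), α i)
        + Real.sqrt (2 * k) * schattenNorm 2 (Matrix.diagonal (fun i => (α i : ℂ)) - Uᴴ * ρ * U)
        + 1 - (Pk * (Uᴴ * ρ * U)).trace.re := by
  classical
  set σ : Matrix (Fin d) (Fin d) ℂ := Uᴴ * ρ * U with hσ
  have hσP : σ.PosSemidef := by
    have := hρ.conjTranspose_mul_mul_same (B := U)
    simpa [hσ] using this
  have hσH : σ.IsHermitian := hσP.1
  have hσtr : σ.trace = 1 := by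
    rw [hσ, Matrix.trace_mul_cycle, unitary_mul_conjT U hU, Matrix.one_mul, hρtr]
  set Dk : Matrix (Fin d) (Fin d) ℂ :=
    Matrix.diagonal (fun i : Fin d => if (i : ℕ) < k then (α i : ℂ) else 0) with hDk
  set DA : Matrix (Fin d) (Fin d) ℂ := Matrix.diagonal (fun i => (α i : ℂ)) with hDA
  set P : Matrix (Fin d) (Fin d) ℂ :=
    Matrix.diagonal (fun i : Fin d => if (i : ℕ) < k then (1 : ℂ) else 0) with hP
  set Q : Matrix (Fin d) (Fin d) ℂ :=
    Matrix.diagonal (fun i : Fin d => if (i : ℕ) < k then (0 : ℂ) else 1) with hQ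
  set X : Matrix (Fin d) (Fin d) ℂ := DA - σ with hX
  set M : Matrix (Fin d) (Fin d) ℂ := X - Q * X * Q with hM
  set N : Matrix (Fin d) (Fin d) ℂ := Q * σ * Q with hN
  -- hermitian facts
  have hDAH : DA.IsHermitian := by
    rw [Matrix.IsHermitian, hDA, Matrix.diagonal_conjTranspose]
    apply congrArg Matrix.diagonal
    funext i
    simp
  have hQH : Q.IsHermitian := by
    rw [Matrix.IsHermitian, hQ, Matrix.diagonal_conjTranspose]
    apply congrArg Matrix.diagonal
    funext i
    by_cases h : (i : ℕ) < k <;> simp [h]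
  have hXH : X.IsHermitian := hDAH.sub hσH
  have hMH : M.IsHermitian := by
    have : (Q * X * Q).IsHermitian := by
      rw [Matrix.IsHermitian, Matrix.conjTranspose_mul, Matrix.conjTranspose_mul,
        hQH.eq, hXH.eq]
      noncomm_ring
    exact hXH.sub this
  have hNP : N.PosSemidef := by
    have := hσP.conjTranspose_mul_mul_same (B := Q)
    rwa [hQH.eq] at this
  -- step 1: conjugation
  have step1 : U * Dk * Uᴴ - ρ = U * (Dk - σ) * Uᴴ := by
    have hρσ : U * σ * Uᴴ = ρ := by
      rw [hσ]
      calc U * (Uᴴ * ρ * U) * Uᴴ = (U * Uᴴ) * ρ * (U * Uᴴ) := by noncomm_ring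
        _ = ρ := by rw [unitary_mul_conjT U hU]; noncomm_ring
    rw [Matrix.mul_sub, Matrix.sub_mul, hρσ]
  -- step 3: decomposition
  have hPQ : P + Q = 1 := by
    rw [hP, hQ, Matrix.diagonal_add, ← Matrix.diagonal_one]
    apply congrArg Matrix.diagonal
    funext i
    by_cases h : (i : ℕ) < k <;> simp [h]
  have decomp : Dk - σ = M + -N := by
    have h3 : Q * DA * Q = Matrix.diagonal
        (fun i : Fin d => if (i : ℕ) < k then (0:ℂ) else (α i : ℂ)) := by
      rw [hQ, hDA, Matrix.diagonal_mul_diagonal, Matrix.diagonal_mul_diagonal]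
      apply congrArg Matrix.diagonal
      funext i
      by_cases h : (i : ℕ) < k <;> simp [h]
    have h4 : Dk = DA - Matrix.diagonal
        (fun i : Fin d => if (i : ℕ) < k then (0:ℂ) else (α i : ℂ)) := by
      rw [hDA, hDk, Matrix.diagonal_sub]
      apply congrArg Matrix.diagonal
      funext i
      by_cases h : (i : ℕ) < k <;> simp [h]
    rw [hM, hN, hX, h4, ← h3]
    noncomm_ring
  -- rank bound
  have hrankP : P.rank = k := by
    rw [hP, Matrix.rank_diagonal, Fintype.card_subtype]
    have he : (Finset.univ.filter fun i : Fin d =>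
        (if (i : ℕ) < k then (1:ℂ) else 0) ≠ 0)
        = (Finset.univ.filter fun i : Fin d => (i : ℕ) < k) := by
      ext i
      by_cases h : (i : ℕ) < k <;> simp [h]
    rw [he, card_filter_lt k hkd]
  have hrankM : M.rank ≤ 2 * k := by
    have hMalt : M = P * X + Q * X * P := by
      have hPeq : P = 1 - Q := by rw [← hPQ]; abel
      rw [hM, hPeq]
      noncomm_ring
    calc M.rank = (P * X + Q * X * P).rank := by rw [hMalt]
      _ ≤ (P * X).rank + (Q * X * P).rank := matrix_rank_add_le _ _
      _ ≤ P.rank + P.rank :=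
          add_le_add (Matrix.rank_mul_le_left P X) (Matrix.rank_mul_le_right (Q * X) P)
      _ = 2 * k := by rw [hrankP]; ring
  -- frobenius comparison
  have hfro : schattenNorm 2 M ≤ schattenNorm 2 X := by
    apply schatten2_mono_entries
    intro i j
    have hQd : ∀ a b, (Q * X * Q) a b
        = (if (a : ℕ) < k then (0:ℂ) else 1) * X a b * (if (b : ℕ) < k then (0:ℂ) else 1) := by
      intro a b
      rw [hQ, Matrix.mul_diagonal, Matrix.diagonal_mul]
    have hMij : M i j = X i j - (if (i : ℕ) < k then (0:ℂ) else 1) * X i j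
        * (if (j : ℕ) < k then (0:ℂ) else 1) := by
      rw [hM, Matrix.sub_apply, hQd]
    by_cases hi : (i : ℕ) < k
    · rw [hMij]; simp [hi]
    · by_cases hj : (j : ℕ) < k
      · rw [hMij]; simp [hi, hj]
      · rw [hMij]; simp [hi, hj, Complex.normSq_nonneg]
  -- trace of N
  have hQQ : Q * Q = Q := by
    rw [hQ, Matrix.diagonal_mul_diagonal]
    apply congrArg Matrix.diagonal
    funext i
    by_cases h : (i : ℕ) < k <;> simp [h]
  have hNtr : N.trace = 1 - (P * σ).trace := by
    have h1 : N.trace = (Q * σ).trace := by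
      rw [hN, Matrix.trace_mul_comm (Q * σ) Q, ← Matrix.mul_assoc, hQQ]
    have h2 : (P * σ).trace + (Q * σ).trace = 1 := by
      rw [← Matrix.trace_add, ← Matrix.add_mul, hPQ, Matrix.one_mul, hσtr]
    rw [h1]
    linear_combination h2
  -- main chain
  have key : schattenNorm 1 (U * Dk * Uᴴ - ρ)
      ≤ Real.sqrt (2 * k) * schattenNorm 2 X + (1 - (P * σ).trace.re) := by
    rw [step1, schattenNorm_conj 1 (Dk - σ) U hU, decomp]
    have htri := schatten1_add_le M (-N) hMH (by
      have : (-N).IsHermitian := hNP.1.neg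
      exact this)
    have hnegN : schattenNorm 1 (-N) = schattenNorm 1 N := by
      apply schattenNorm_congr
      simp
    have hNval : schattenNorm 1 N = 1 - (P * σ).trace.re := by
      rw [schatten1_psd N hNP, hNtr]
      simp
    have hMval : schattenNorm 1 M ≤ Real.sqrt (2 * k) * schattenNorm 2 M := by
      have := schatten1_le_sqrt_rank M hMH (2 * k) hrankM
      rwa [show ((2 * k : ℕ) : ℝ) = 2 * (k : ℝ) by push_cast; ring] at this
    calc schattenNorm 1 (M + -N) ≤ schattenNorm 1 M + schattenNorm 1 (-N) := htri
      _ ≤ Real.sqrt (2 * k) * schattenNorm 2 M + (1 - (P * σ).trace.re) := by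
          rw [hnegN, hNval]
          exact add_le_add_left hMval _
      _ ≤ Real.sqrt (2 * k) * schattenNorm 2 X + (1 - (P * σ).trace.re) := by
          have h0 : (0:ℝ) ≤ Real.sqrt (2 * k) := Real.sqrt_nonneg _
          gcongr
  have htail : 0 ≤ Real.sqrt (2 * k)
      * (∑ i ∈ Finset.univ.filter (fun i : Fin d => k ≤ (i : ℕ)), α i) := by
    apply mul_nonneg (Real.sqrt_nonneg _)
    exact Finset.sum_nonneg fun i _ => hαnn i
  rw [hPk]
  calc schattenNorm 1 (U * Dk * Uᴴ - ρ)
      ≤ Real.sqrt (2 * k) * schattenNorm 2 X + (1 - (P * σ).trace.re) := key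
    _ ≤ Real.sqrt (2 * k) * (∑ i ∈ Finset.univ.filter (fun i : Fin d => k ≤ (i : ℕ)), α i)
        + Real.sqrt (2 * k) * schattenNorm 2 X + 1 - (P * σ).trace.re := by linarith
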